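/- Laplace approximation in one dimension: let f : ℝ → ℝ be C², attaining a strict global maximum at x₀ ∈ (a,b) with f''(x₀) < 0, satisfying suitable regularity (e.g., f(x) < f(x₀) uniformly away from x₀). Then ∫ₐᵇ e^{λf(x)} dx · √(λ|f''(x₀)|/(2π)) · e^{−λf(x₀)} → 1 as λ → ∞. -/

import Mathlib

open Real Filter MeasureTheory intervalIntegral Set

section helpers

lemma gauss_window {k δ : ℝ} (hk : 0 < k) (hδ : 0 < δ) :
    Tendsto (fun s : ℝ => Real.sqrt s * ∫ u in (-δ)..δ, Real.exp (-(s * k) * u ^ 2))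
      atTop (nhds (Real.sqrt (π / k))) := by
  have hmain : Tendsto (fun s : ℝ =>
      (Real.sqrt k)⁻¹ * ∫ v in (-(Real.sqrt (s * k) * δ))..(Real.sqrt (s * k) * δ),
        Real.exp (-1 * v ^ 2)) atTop (nhds (Real.sqrt (π / k))) := by
    have hint : Integrable (fun v : ℝ => Real.exp (-1 * v ^ 2)) :=
      integrable_exp_neg_mul_sq one_pos
    have hb : Tendsto (fun s : ℝ => Real.sqrt (s * k) * δ) atTop atTop := by
      apply Tendsto.atTop_mul_const hδ
      have hsq : Tendsto Real.sqrt atTop atTop := by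
        simpa only [← Real.sqrt_eq_rpow] using tendsto_rpow_atTop (by norm_num : (0:ℝ) < 1/2)
      exact hsq.comp (tendsto_id.atTop_mul_const hk)
    have ha : Tendsto (fun s : ℝ => -(Real.sqrt (s * k) * δ)) atTop atBot :=
      tendsto_neg_atBot_iff.mpr hb
    have h0 := MeasureTheory.intervalIntegral_tendsto_integral hint ha hb
    have : (∫ v : ℝ, Real.exp (-1 * v ^ 2)) = Real.sqrt π := by
      rw [integral_gaussian 1]; norm_num
    rw [this] at h0
    have := h0.const_mul (Real.sqrt k)⁻¹
    convert this using 2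
    rw [← Real.sqrt_inv, ← Real.sqrt_mul (by positivity), div_eq_mul_inv, mul_comm]
  apply hmain.congr'
  filter_upwards [eventually_gt_atTop (0:ℝ)] with s hs
  have hsk : 0 < s * k := by positivity
  have hc : Real.sqrt (s * k) ≠ 0 := by positivity
  have hsub : ∫ u in (-δ)..δ, Real.exp (-(s * k) * u ^ 2)
      = (Real.sqrt (s * k))⁻¹ * ∫ v in (-(Real.sqrt (s * k) * δ))..(Real.sqrt (s * k) * δ),
          Real.exp (-1 * v ^ 2) := by
    have := intervalIntegral.integral_comp_mul_left (a := -δ) (b := δ)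
      (fun v => Real.exp (-1 * v ^ 2)) hc
    rw [mul_neg, smul_eq_mul] at this
    rw [← this]
    congr 1
    ext u
    congr 1
    rw [mul_pow, Real.sq_sqrt hsk.le]
    ring
  rw [hsub, ← mul_assoc]
  congr 1
  rw [Real.sqrt_mul hs.le, mul_inv, ← mul_assoc, mul_inv_cancel₀ (by positivity), one_mul]

lemma taylor_right {f : ℝ → ℝ} (hf : ContDiff ℝ 2 f) {x₀ x : ℝ} (hx : x₀ < x) :
    ∃ η ∈ Set.Ioo x₀ x,
      f x - f x₀ - deriv f x₀ * (x - x₀) = deriv (deriv f) η / 2 * (x - x₀) ^ 2 := by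
  have hdf : Differentiable ℝ f := hf.differentiable (by norm_num)
  have hdf' : Differentiable ℝ (deriv f) := by
    have h := (contDiff_succ_iff_deriv (n := 1)).mp (by exact_mod_cast hf)
    exact h.2.2.differentiable one_ne_zero
  have hC1 : ContDiffOn ℝ 1 f (Icc x₀ x) := (hf.of_le one_le_two).contDiffOn
  have huniq := uniqueDiffOn_Icc hx
  have hiter1 : ∀ y ∈ Icc x₀ x, iteratedDerivWithin 1 f (Icc x₀ x) y = deriv f y := by
    intro y hy
    rw [iteratedDerivWithin_one]
    exact (hdf y).derivWithin (huniq y hy)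
  have hdiff : DifferentiableOn ℝ (iteratedDerivWithin 1 f (Icc x₀ x)) (Ioo x₀ x) := by
    apply DifferentiableOn.congr (f := deriv f)
    · exact (hdf'.differentiableOn)
    · intro y hy; exact hiter1 y (Ioo_subset_Icc_self hy)
  have hC1' : ContDiffOn ℝ 1 f (uIcc x₀ x) := by rw [uIcc_of_le hx.le]; exact hC1
  have hdiff' : DifferentiableOn ℝ (iteratedDerivWithin 1 f (uIcc x₀ x)) (uIoo x₀ x) := by
    rw [uIcc_of_le hx.le, uIoo_of_le hx.le]; exact hdiff
  obtain ⟨η, hη, heq⟩ := taylor_mean_remainder_lagrange (n := 1) hx.ne hC1' hdiff'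
  rw [uIoo_of_le hx.le] at hη
  rw [uIcc_of_le hx.le] at heq
  refine ⟨η, hη, ?_⟩
  have h2 : iteratedDerivWithin 2 f (Icc x₀ x) η = deriv (deriv f) η := by
    rw [show (2:ℕ) = 1 + 1 from rfl, iteratedDerivWithin_succ]
    rw [derivWithin_congr hiter1 (hiter1 η (Ioo_subset_Icc_self hη))]
    exact (hdf' η).derivWithin (huniq η (Ioo_subset_Icc_self hη))
  have htay : taylorWithinEval f 1 (Icc x₀ x) x₀ x = f x₀ + deriv f x₀ * (x - x₀) := by
    rw [taylor_within_apply]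
    simp [Finset.sum_range_succ, iteratedDerivWithin_zero]
    rw [← iteratedDerivWithin_one, hiter1 x₀ (left_mem_Icc.mpr hx.le)]
    ring
  rw [htay] at heq
  rw [h2] at heq
  rw [show f x - (f x₀ + deriv f x₀ * (x - x₀)) = f x - f x₀ - deriv f x₀ * (x - x₀) by ring] at heq
  rw [heq]
  norm_num [Nat.factorial]
  ring

lemma taylor_both {f : ℝ → ℝ} (hf : ContDiff ℝ 2 f) {x₀ : ℝ} (h0 : deriv f x₀ = 0) (x : ℝ) :
    ∃ η, |η - x₀| ≤ |x - x₀| ∧ f x - f x₀ = deriv (deriv f) η / 2 * (x - x₀) ^ 2 := by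
  rcases lt_trichotomy x x₀ with hlt | heq | hgt
  · -- reflect
    set g : ℝ → ℝ := fun y => f (2 * x₀ - y) with hg
    have hgC : ContDiff ℝ 2 g := hf.comp (contDiff_const.sub contDiff_id)
    have hgd : ∀ y, deriv g y = -deriv f (2 * x₀ - y) := fun y =>
      deriv_comp_const_sub f (2 * x₀) y
    have hdf' : Differentiable ℝ (deriv f) := by
      have h := (contDiff_succ_iff_deriv (n := 1)).mp (by exact_mod_cast hf)
      exact h.2.2.differentiable one_ne_zero
    have hgdd : ∀ y, deriv (deriv g) y = deriv (deriv f) (2 * x₀ - y) := by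
      intro y
      have : deriv g = fun y => -deriv f (2 * x₀ - y) := funext hgd
      rw [this, deriv.fun_neg, deriv_comp_const_sub (deriv f) (2 * x₀) y, neg_neg]
    obtain ⟨η', hη', heq⟩ := taylor_right hgC (show x₀ < 2 * x₀ - x by linarith)
    refine ⟨2 * x₀ - η', ?_, ?_⟩
    · rw [abs_sub_comm x x₀, abs_of_pos (by linarith : (0:ℝ) < x₀ - x)]
      rw [abs_le]; obtain ⟨h1, h2⟩ := hη'; constructor <;> linarith
    · have hgx : g (2 * x₀ - x) = f x := by show f (2 * x₀ - (2 * x₀ - x)) = f x; ring_nf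
      have hgx₀ : g x₀ = f x₀ := by show f (2 * x₀ - x₀) = f x₀; ring_nf
      have hgd0 : deriv g x₀ = 0 := by rw [hgd]; simp [show 2 * x₀ - x₀ = x₀ by ring, h0]
      rw [hgx, hgx₀, hgd0, hgdd] at heq
      rw [show f x - f x₀ = f x - f x₀ - 0 * (2 * x₀ - x - x₀) by ring, heq]
      ring_nf
  · exact ⟨x₀, by simp [heq]⟩
  · obtain ⟨η, hη, heq⟩ := taylor_right hf hgt
    refine ⟨η, ?_, ?_⟩
    · obtain ⟨h1, h2⟩ := hη
      rw [abs_of_pos (by linarith : (0:ℝ) < η - x₀), abs_of_pos (by linarith : (0:ℝ) < x - x₀)]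
      linarith
    · rw [h0] at heq; linarith [heq]

lemma sqrt_exp_decay {c : ℝ} (hc : 0 < c) :
    Tendsto (fun lam : ℝ => Real.sqrt lam * Real.exp (-lam * c)) atTop (nhds 0) := by
  have h1 : Tendsto (fun y : ℝ => y * Real.exp (-y)) atTop (nhds 0) := by
    simpa using Real.tendsto_pow_mul_exp_neg_atTop_nhds_zero 1
  have h2 : Tendsto (fun lam : ℝ => c⁻¹ * ((c * lam) * Real.exp (-(c * lam)))) atTop (nhds 0) := by
    have := (h1.comp (tendsto_id.const_mul_atTop hc)).const_mul c⁻¹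
    simpa using this
  apply tendsto_of_tendsto_of_tendsto_of_le_of_le' tendsto_const_nhds h2
  · filter_upwards with lam; positivity
  · filter_upwards [eventually_ge_atTop (1:ℝ)] with lam hlam
    have hs : Real.sqrt lam ≤ lam := by
      nlinarith [Real.sq_sqrt (by linarith : (0:ℝ) ≤ lam), Real.sqrt_nonneg lam,
        Real.sqrt_le_sqrt hlam, Real.sqrt_one]
    have : c⁻¹ * (c * lam * Real.exp (-(c * lam))) = lam * Real.exp (-lam * c) := by
      field_simp
    rw [this]
    apply mul_le_mul_of_nonneg_right hs (Real.exp_nonneg _)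

end helpers

set_option maxHeartbeats 1000000 in
theorem stmt_19 (a b x₀ : ℝ) (f : ℝ → ℝ) (hab : a < b)
    (hf : ContDiff ℝ 2 f) (hx₀ : x₀ ∈ Set.Ioo a b)
    (hmax : ∀ x ∈ Set.Icc a b, x ≠ x₀ → f x < f x₀)
    (hf'' : deriv (deriv f) x₀ < 0) :
    Tendsto (fun lam : ℝ =>
        (∫ x in a..b, Real.exp (lam * f x)) *
          Real.sqrt (lam * |deriv (deriv f) x₀| / (2 * π)) *
          Real.exp (-lam * f x₀))
      atTop (nhds 1) := by
  obtain ⟨ha₀, hb₀⟩ := hx₀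
  set A := deriv (deriv f) x₀ with hAdef
  have hAneg : A < 0 := hf''
  have hAabs : |A| = -A := abs_of_neg hAneg
  have hApos : 0 < -A := by linarith
  have hfc : Continuous f := hf.continuous
  -- second derivative continuous
  have hstep := (contDiff_succ_iff_deriv (n := 1)).mp (by exact_mod_cast hf)
  have hdf'C : ContDiff ℝ 1 (deriv f) := hstep.2.2
  have hf''cont : Continuous (deriv (deriv f)) := by
    have := (contDiff_succ_iff_deriv (n := 0)).mp (by exact_mod_cast hdf'C)
    exact this.2.2.continuous
  -- first derivative vanishes at x₀
  have hderiv0 : deriv f x₀ = 0 := by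
    apply IsLocalMax.deriv_eq_zero
    filter_upwards [Ioo_mem_nhds ha₀ hb₀] with x hx
    by_cases hxx : x = x₀
    · simp [hxx]
    · exact (hmax x (Ioo_subset_Icc_self hx) hxx).le
  -- rewrite goal: G lam = J lam * sqrt(...)
  set C : ℝ := Real.sqrt ((-A) / (2 * π)) with hCdef
  have hCpos : 0 < C := Real.sqrt_pos.mpr (by positivity)
  rw [Metric.tendsto_nhds]
  intro ε hε
  -- choose ε' ∈ (0, -A) controlling the limits
  obtain ⟨ε', hε'pos, hε'A, hlow, hhigh⟩ :
      ∃ ε' : ℝ, 0 < ε' ∧ ε' < -A ∧ 1 - ε < Real.sqrt ((-A) / (-A + ε')) ∧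
        Real.sqrt ((-A) / (-A - ε')) < 1 + ε := by
    have hc1 : ContinuousAt (fun t : ℝ => Real.sqrt ((-A) / (-A + t))) 0 := by
      apply ContinuousAt.sqrt
      exact (continuousAt_const.div (continuousAt_const.add continuousAt_id) (by simpa using hApos.ne'))
    have hc2 : ContinuousAt (fun t : ℝ => Real.sqrt ((-A) / (-A - t))) 0 := by
      apply ContinuousAt.sqrt
      exact (continuousAt_const.div (continuousAt_const.sub continuousAt_id) (by simpa using hApos.ne'))
    have hval : Real.sqrt ((-A) / (-A + 0)) = 1 := by
      rw [add_zero, div_self hApos.ne', Real.sqrt_one]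
    have hval2 : Real.sqrt ((-A) / (-A - 0)) = 1 := by
      rw [sub_zero, div_self hApos.ne', Real.sqrt_one]
    have h1 : ∀ᶠ t in nhds (0:ℝ), 1 - ε < Real.sqrt ((-A) / (-A + t)) := by
      apply hc1.eventually_mem (s := Set.Ioi (1 - ε))
      rw [hval]; exact Ioi_mem_nhds (by linarith)
    have h2 : ∀ᶠ t in nhds (0:ℝ), Real.sqrt ((-A) / (-A - t)) < 1 + ε := by
      apply hc2.eventually_mem (s := Set.Iio (1 + ε))
      rw [hval2]; exact Iio_mem_nhds (by linarith)
    obtain ⟨δ₀, hδ₀, hδ₀p⟩ := Metric.eventually_nhds_iff.mp (h1.and h2)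
    have hminpos : 0 < min (δ₀ / 2) ((-A) / 2) := lt_min (by linarith) (by linarith)
    have hmem : dist (min (δ₀ / 2) ((-A) / 2)) 0 < δ₀ := by
      rw [Real.dist_eq, sub_zero, abs_of_pos hminpos]
      calc min (δ₀ / 2) ((-A) / 2) ≤ δ₀ / 2 := min_le_left _ _
        _ < δ₀ := by linarith
    refine ⟨min (δ₀ / 2) ((-A) / 2), hminpos, ?_, (hδ₀p hmem).1, (hδ₀p hmem).2⟩
    calc min (δ₀ / 2) ((-A) / 2) ≤ (-A) / 2 := min_le_right _ _
      _ < -A := by linarith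
  -- choose δ₁ from continuity of f''
  obtain ⟨δ₁, hδ₁pos, hδ₁⟩ :
      ∃ δ₁ > 0, ∀ η, |η - x₀| ≤ δ₁ → |deriv (deriv f) η - A| ≤ ε' := by
    obtain ⟨d, hd, hdp⟩ := Metric.continuousAt_iff.mp (hf''cont.continuousAt (x := x₀)) ε' hε'pos
    refine ⟨d / 2, by linarith, fun η hη => ?_⟩
    have : dist η x₀ < d := by rw [Real.dist_eq]; linarith
    have := hdp this
    rw [Real.dist_eq] at this
    exact this.le
  set δ : ℝ := min δ₁ (min (x₀ - a) (b - x₀)) with hδdef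
  have hδpos : 0 < δ := lt_min hδ₁pos (lt_min (by linarith) (by linarith))
  have hδ₁' : δ ≤ δ₁ := min_le_left _ _
  have hδa : a ≤ x₀ - δ := by
    have : δ ≤ x₀ - a := (min_le_right _ _).trans (min_le_left _ _)
    linarith
  have hδb : x₀ + δ ≤ b := by
    have : δ ≤ b - x₀ := (min_le_right _ _).trans (min_le_right _ _)
    linarith
  -- quadratic bounds near x₀
  have hquad : ∀ x, |x - x₀| ≤ δ →
      (A - ε') / 2 * (x - x₀) ^ 2 ≤ f x - f x₀ ∧
        f x - f x₀ ≤ (A + ε') / 2 * (x - x₀) ^ 2 := by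
    intro x hx
    obtain ⟨η, hηle, heq⟩ := taylor_both hf hderiv0 x
    have hηA := hδ₁ η (hηle.trans (hx.trans hδ₁'))
    rw [abs_le] at hηA
    obtain ⟨hm1, hm2⟩ := hηA
    constructor <;> nlinarith [sq_nonneg (x - x₀)]
  -- the gap η₀ away from x₀
  set K : Set ℝ := Icc a b ∩ {x | δ ≤ |x - x₀|} with hKdef
  have haK : a ∈ K := by
    refine ⟨left_mem_Icc.mpr hab.le, ?_⟩
    show δ ≤ |a - x₀|
    rw [abs_of_neg (by linarith : a - x₀ < 0)]
    have : δ ≤ x₀ - a := (min_le_right _ _).trans (min_le_left _ _)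
    linarith
  have hKcomp : IsCompact K :=
    isCompact_Icc.inter_right
      (isClosed_le continuous_const (continuous_id.sub continuous_const).abs)
  obtain ⟨z, hzK, hz⟩ := hKcomp.exists_isMaxOn ⟨a, haK⟩ hfc.continuousOn
  set η₀ : ℝ := f x₀ - f z with hη₀def
  have hzne : z ≠ x₀ := by
    intro h
    have := hzK.2
    rw [h] at this
    simp at this
    linarith
  have hη₀pos : 0 < η₀ := by
    have := hmax z hzK.1 hzne
    simp only [hη₀def]; linarith
  have hgap : ∀ x ∈ K, f x ≤ f x₀ - η₀ := by
    intro x hx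
    have := hz hx
    simp only [hη₀def]
    simp at this
    linarith
  -- constants for the gaussian comparisons
  set kp : ℝ := (ε' - A) / 2 with hkp
  set km : ℝ := (-A - ε') / 2 with hkm
  have hkppos : 0 < kp := by simp only [hkp]; linarith
  have hkmpos : 0 < km := by simp only [hkm]; linarith
  -- limit of the lower comparison
  have hLoT : Tendsto (fun lam : ℝ =>
      Real.sqrt lam * (∫ u in (-δ)..δ, Real.exp (-(lam * kp) * u ^ 2)) * C)
      atTop (nhds (Real.sqrt ((-A) / (-A + ε')))) := by
    have h := (gauss_window hkppos hδpos).mul_const C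
    have hval : Real.sqrt (π / kp) * C = Real.sqrt ((-A) / (-A + ε')) := by
      rw [hCdef, ← Real.sqrt_mul (by positivity)]
      congr 1
      have hne : ε' - A ≠ 0 := ne_of_gt (by linarith)
      have hne2 : -A + ε' ≠ 0 := ne_of_gt (by linarith)
      rw [hkp]
      field_simp
      ring
    rw [hval] at h
    exact h.congr (fun lam => by ring)
  have hLoEv : ∀ᶠ lam in atTop,
      1 - ε < Real.sqrt lam * (∫ u in (-δ)..δ, Real.exp (-(lam * kp) * u ^ 2)) * C :=
    hLoT.eventually_const_lt hlow
  -- limit of the upper comparison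
  have hUpT : Tendsto (fun lam : ℝ =>
      Real.sqrt lam * (∫ u in (-δ)..δ, Real.exp (-(lam * km) * u ^ 2)) * C
        + Real.sqrt lam * Real.exp (-lam * η₀) * ((b - a) * C))
      atTop (nhds (Real.sqrt ((-A) / (-A - ε')))) := by
    have h1 : Tendsto (fun lam : ℝ =>
        Real.sqrt lam * (∫ u in (-δ)..δ, Real.exp (-(lam * km) * u ^ 2)) * C)
        atTop (nhds (Real.sqrt ((-A) / (-A - ε')))) := by
      have h := (gauss_window hkmpos hδpos).mul_const C
      have hval : Real.sqrt (π / km) * C = Real.sqrt ((-A) / (-A - ε')) := by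
        rw [hCdef, ← Real.sqrt_mul (by positivity)]
        congr 1
        have hne : -A - ε' ≠ 0 := ne_of_gt (by linarith)
        rw [hkm]
        field_simp
      rw [hval] at h
      exact h.congr (fun lam => by ring)
    have h2 : Tendsto (fun lam : ℝ =>
        Real.sqrt lam * Real.exp (-lam * η₀) * ((b - a) * C)) atTop (nhds 0) := by
      have := (sqrt_exp_decay hη₀pos).mul_const ((b - a) * C)
      simpa using this
    simpa using h1.add h2
  have hUpEv : ∀ᶠ lam in atTop,
      Real.sqrt lam * (∫ u in (-δ)..δ, Real.exp (-(lam * km) * u ^ 2)) * C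
        + Real.sqrt lam * Real.exp (-lam * η₀) * ((b - a) * C) < 1 + ε :=
    hUpT.eventually_lt_const hhigh
  -- final eventual bound
  filter_upwards [eventually_gt_atTop (0:ℝ), hLoEv, hUpEv] with lam hlam hLo hUp
  set E : ℝ := Real.exp (-lam * η₀) with hEdef
  have hsqrt : Real.sqrt (lam * |A| / (2 * π)) = Real.sqrt lam * C := by
    rw [hAabs, hCdef, ← Real.sqrt_mul hlam.le]
    congr 1
    ring
  set J : ℝ := ∫ x in a..b, Real.exp (lam * (f x - f x₀)) with hJdef
  have hG : (∫ x in a..b, Real.exp (lam * f x)) * Real.sqrt (lam * |A| / (2 * π)) *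
      Real.exp (-lam * f x₀) = J * (Real.sqrt lam * C) := by
    rw [hsqrt, hJdef]
    have : (∫ x in a..b, Real.exp (lam * (f x - f x₀)))
        = (∫ x in a..b, Real.exp (lam * f x)) * Real.exp (-lam * f x₀) := by
      rw [← intervalIntegral.integral_mul_const]
      congr 1
      ext x
      rw [← Real.exp_add]
      ring_nf
    rw [this]
    ring
  rw [hG]
  -- integrability
  have hig : ∀ (c d : ℝ), IntervalIntegrable (fun x => Real.exp (lam * (f x - f x₀))) volume c d :=
    fun c d => (Real.continuous_exp.comp (by fun_prop)).intervalIntegrable c d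
  have higp : ∀ (c d : ℝ), IntervalIntegrable (fun x => Real.exp (-(lam * kp) * (x - x₀) ^ 2)) volume c d :=
    fun c d => (Real.continuous_exp.comp (by fun_prop)).intervalIntegrable c d
  have higm : ∀ (c d : ℝ), IntervalIntegrable (fun x => Real.exp (-(lam * km) * (x - x₀) ^ 2)) volume c d :=
    fun c d => (Real.continuous_exp.comp (by fun_prop)).intervalIntegrable c d
  -- split the integral
  set T1 : ℝ := ∫ x in a..(x₀ - δ), Real.exp (lam * (f x - f x₀)) with hT1
  set M : ℝ := ∫ x in (x₀ - δ)..(x₀ + δ), Real.exp (lam * (f x - f x₀)) with hM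
  set T2 : ℝ := ∫ x in (x₀ + δ)..b, Real.exp (lam * (f x - f x₀)) with hT2
  have hsplit : J = T1 + M + T2 := by
    rw [hJdef, hT1, hM, hT2,
      intervalIntegral.integral_add_adjacent_intervals (hig _ _) (hig _ _),
      intervalIntegral.integral_add_adjacent_intervals (hig _ _) (hig _ _)]
  -- change of variables for gaussian pieces
  have hcomp : ∀ c : ℝ, (∫ x in (x₀ - δ)..(x₀ + δ), Real.exp (-(lam * c) * (x - x₀) ^ 2))
      = ∫ u in (-δ)..δ, Real.exp (-(lam * c) * u ^ 2) := by
    intro c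
    have := intervalIntegral.integral_comp_sub_right
      (a := x₀ - δ) (b := x₀ + δ) (fun u => Real.exp (-(lam * c) * u ^ 2)) x₀
    rw [this]
    congr 1 <;> ring
  -- lower bound
  have hMlow : (∫ u in (-δ)..δ, Real.exp (-(lam * kp) * u ^ 2)) ≤ M := by
    rw [← hcomp kp, hM]
    apply intervalIntegral.integral_mono_on (by linarith) (higp _ _) (hig _ _)
    intro x hx
    have hxd : |x - x₀| ≤ δ := by
      rw [abs_le]
      obtain ⟨h1, h2⟩ := hx
      constructor <;> linarith
    have hq := (hquad x hxd).1
    apply Real.exp_le_exp.mpr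
    have : -(lam * kp) * (x - x₀) ^ 2 = lam * ((A - ε') / 2 * (x - x₀) ^ 2) := by
      rw [hkp]; ring
    rw [this]
    have := mul_le_mul_of_nonneg_left hq hlam.le
    linarith
  have hT1nn : 0 ≤ T1 :=
    intervalIntegral.integral_nonneg hδa (fun x _ => Real.exp_nonneg _)
  have hT2nn : 0 ≤ T2 :=
    intervalIntegral.integral_nonneg hδb (fun x _ => Real.exp_nonneg _)
  have hJlow : (∫ u in (-δ)..δ, Real.exp (-(lam * kp) * u ^ 2)) ≤ J := by
    rw [hsplit]; linarith
  -- upper bounds on the tails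
  have htail1 : T1 ≤ (x₀ - δ - a) * E := by
    rw [hT1]
    have := intervalIntegral.integral_mono_on (a := a) (b := x₀ - δ) (μ := volume) hδa (hig _ _)
      (_root_.intervalIntegrable_const (c := E)) ?_
    · rw [intervalIntegral.integral_const, smul_eq_mul] at this
      linarith
    · intro x hx
      have hxK : x ∈ K := by
        refine ⟨⟨hx.1, by linarith [hx.2]⟩, ?_⟩
        show δ ≤ |x - x₀|
        rw [abs_of_nonpos (by linarith [hx.2] : x - x₀ ≤ 0)]
        linarith [hx.2]
      have := hgap x hxK
      rw [hEdef]
      apply Real.exp_le_exp.mpr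
      nlinarith
  have htail2 : T2 ≤ (b - (x₀ + δ)) * E := by
    rw [hT2]
    have := intervalIntegral.integral_mono_on (a := x₀ + δ) (b := b) (μ := volume) hδb (hig _ _)
      (_root_.intervalIntegrable_const (c := E)) ?_
    · rw [intervalIntegral.integral_const, smul_eq_mul] at this
      linarith
    · intro x hx
      have hxK : x ∈ K := by
        refine ⟨⟨by linarith [hx.1], hx.2⟩, ?_⟩
        show δ ≤ |x - x₀|
        rw [abs_of_nonneg (by linarith [hx.1] : 0 ≤ x - x₀)]
        linarith [hx.1]
      have := hgap x hxK
      rw [hEdef]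
      apply Real.exp_le_exp.mpr
      nlinarith
  have hMup : M ≤ ∫ u in (-δ)..δ, Real.exp (-(lam * km) * u ^ 2) := by
    rw [← hcomp km, hM]
    apply intervalIntegral.integral_mono_on (by linarith) (hig _ _) (higm _ _)
    intro x hx
    have hxd : |x - x₀| ≤ δ := by
      rw [abs_le]
      obtain ⟨h1, h2⟩ := hx
      constructor <;> linarith
    have hq := (hquad x hxd).2
    apply Real.exp_le_exp.mpr
    have : -(lam * km) * (x - x₀) ^ 2 = lam * ((A + ε') / 2 * (x - x₀) ^ 2) := by
      rw [hkm]; ring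
    rw [this]
    have := mul_le_mul_of_nonneg_left hq hlam.le
    linarith
  have hEnn : 0 ≤ E := Real.exp_nonneg _
  have hJup : J ≤ (∫ u in (-δ)..δ, Real.exp (-(lam * km) * u ^ 2)) + (b - a) * E := by
    rw [hsplit]
    have hsum : (x₀ - δ - a) * E + (b - (x₀ + δ)) * E ≤ (b - a) * E := by
      rw [← add_mul]
      exact mul_le_mul_of_nonneg_right (by linarith) hEnn
    linarith
  -- conclude
  have hsCnn : 0 ≤ Real.sqrt lam * C := by positivity
  have hGlow : Real.sqrt lam * (∫ u in (-δ)..δ, Real.exp (-(lam * kp) * u ^ 2)) * C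
      ≤ J * (Real.sqrt lam * C) := by
    calc Real.sqrt lam * (∫ u in (-δ)..δ, Real.exp (-(lam * kp) * u ^ 2)) * C
        = (∫ u in (-δ)..δ, Real.exp (-(lam * kp) * u ^ 2)) * (Real.sqrt lam * C) := by ring
      _ ≤ J * (Real.sqrt lam * C) := mul_le_mul_of_nonneg_right hJlow hsCnn
  have hGup : J * (Real.sqrt lam * C)
      ≤ Real.sqrt lam * (∫ u in (-δ)..δ, Real.exp (-(lam * km) * u ^ 2)) * C
        + Real.sqrt lam * E * ((b - a) * C) := by
    calc J * (Real.sqrt lam * C)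
        ≤ ((∫ u in (-δ)..δ, Real.exp (-(lam * km) * u ^ 2)) + (b - a) * E) *
            (Real.sqrt lam * C) := mul_le_mul_of_nonneg_right hJup hsCnn
      _ = Real.sqrt lam * (∫ u in (-δ)..δ, Real.exp (-(lam * km) * u ^ 2)) * C
            + Real.sqrt lam * E * ((b - a) * C) := by ring
  rw [Real.dist_eq, abs_sub_lt_iff]
  constructor
  · have : Real.sqrt lam * E * ((b - a) * C)
        = Real.sqrt lam * Real.exp (-lam * η₀) * ((b - a) * C) := by rw [hEdef]
    rw [this] at hGup
    linarith
  · linarith
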